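/- Let L be a Lie algebra over ℂ and let p₋, p₊, ρ̄ ∈ L satisfy [p₋, p₊] = −2·ρ̄ and [ρ̄, p₊] = p₊, and let w ∈ L satisfy [p₊, w] = 0. Let V ⊆ ℂ be open and let μ : V → ℂ be three times complex differentiable with μ′(s) ≠ 0 for s ∈ V. Set A(s) := −μ″(s)/μ′(s) and β(s) := μ″(s)/(2·μ′(s)). Then for every s ∈ V: (p₋ + A(s)·ρ̄ + w) + [β(s)·p₊, p₋ + A(s)·ρ̄ + w] + (1/2)·[β(s)·p₊, [β(s)·p₊, p₋ + A(s)·ρ̄ + w]] − β′(s)·p₊ = p₋ + w − (1/2)·(Sμ)(s)·p₊, where Sμ := μ‴/μ′ − (3/2)·(μ″/μ′)² is the Schwarzian derivative of μ. (This is the computation of §6.3 of the paper: in finite types, the further gauge transformation by exp(p̄₁·μ″/(2μ′)) needed after a coordinate change t = μ(s) removes the ρ̄-term from the canonical form of a finite-type oper and shifts the coefficient of p̄₁ by −½Sμ, so that v₁ transforms as a projective connection while the v_i with i > 1 transform as sections of Ω^{i+1}.) -/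

import Mathlib

private lemma aux_schwarz (b c d : ℂ) (hd : d ≠ 0) :
    (c * (2 * d) - b * (2 * b)) / (2 * d) ^ 2
      = (b / (2 * d)) ^ 2 + (1/2 : ℂ) * (c / d - (3/2 : ℂ) * (b / d) ^ 2) := by
  have h : d * d⁻¹ = 1 := mul_inv_cancel₀ hd
  field_simp
  ring

private lemma aux_A (b d : ℂ) (hd : d ≠ 0) : -b / d = -(2 * (b / (2 * d))) := by
  rw [mul_div_assoc', mul_div_mul_left _ _ (two_ne_zero), neg_div]

/-- The computation of §6.3: for an `sl₂`-triple
`[p₋,p₊] = -2ρ̄`, `[ρ̄,p₊] = p₊` and `w` with `[p₊,w] = 0`, gauge transforming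
`p₋ + A(s)·ρ̄ + w` (where `A = -μ″/μ′`) by `exp(β(s)·p₊)` with `β = μ″/(2μ′)`
removes the `ρ̄`-term and shifts the `p₊`-coefficient by `-½·Sμ`, the Schwarzian
derivative of the coordinate change `μ`. -/
theorem statement11 {L : Type*} [LieRing L] [LieAlgebra ℂ L]
    (pm pp ρ : L) (h1 : ⁅pm, pp⁆ = (-2 : ℂ) • ρ) (h2 : ⁅ρ, pp⁆ = pp)
    (w : L) (hw : ⁅pp, w⁆ = 0)
    (V : Set ℂ) (hV : IsOpen V)
    (μ μ' μ'' μ''' : ℂ → ℂ)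
    (hμ : ∀ s ∈ V, HasDerivAt μ (μ' s) s)
    (hμ' : ∀ s ∈ V, HasDerivAt μ' (μ'' s) s)
    (hμ'' : ∀ s ∈ V, HasDerivAt μ'' (μ''' s) s)
    (hne : ∀ s ∈ V, μ' s ≠ 0)
    (A β β' : ℂ → ℂ)
    (hA : ∀ s, A s = -μ'' s / μ' s)
    (hβ : ∀ s, β s = μ'' s / (2 * μ' s))
    (hβ' : ∀ s ∈ V, HasDerivAt β (β' s) s)
    (S : ℂ → ℂ)
    (hS : ∀ s, S s = μ''' s / μ' s - (3/2 : ℂ) * (μ'' s / μ' s) ^ 2) :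
    ∀ s ∈ V,
      (pm + A s • ρ + w) + ⁅β s • pp, pm + A s • ρ + w⁆
        + (1/2 : ℂ) • ⁅β s • pp, ⁅β s • pp, pm + A s • ρ + w⁆⁆
        - β' s • pp
      = pm + w - ((1/2 : ℂ) * S s) • pp := by
  intro s hs
  have hβfun : β = fun s => μ'' s / (2 * μ' s) := funext hβ
  have h2ne : (2 : ℂ) * μ' s ≠ 0 := by simp [hne s hs]
  have hd : HasDerivAt (fun s => μ'' s / (2 * μ' s))
      ((μ''' s * (2 * μ' s) - μ'' s * (2 * μ'' s)) / (2 * μ' s) ^ 2) s :=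
    (hμ'' s hs).div ((hμ' s hs).const_mul 2) h2ne
  have hb' : β' s = (μ''' s * (2 * μ' s) - μ'' s * (2 * μ'' s)) / (2 * μ' s) ^ 2 :=
    (hβfun ▸ hβ' s hs).unique hd
  have e1 : ⁅pp, pm⁆ = (2 : ℂ) • ρ := by
    rw [← lie_skew, h1]; simp
  have e2 : ⁅pp, ρ⁆ = -pp := by
    rw [← lie_skew, h2]
  have hA2 : A s = -(2 * β s) := by
    rw [hA, hβ]; exact aux_A _ _ (hne s hs)
  have hb2 : β' s = β s ^ 2 + (1/2 : ℂ) * S s := by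
    rw [hb', hβ, hS]; exact aux_schwarz _ _ _ (hne s hs)
  rw [hA2, hb2]
  simp only [lie_add, lie_smul, smul_lie, e1, e2, hw, lie_zero, zero_lie, lie_neg, neg_lie, smul_neg,
    smul_zero, add_zero, smul_smul, neg_zero, mul_zero, lie_self]
  match_scalars <;> ring
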